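/- For α > 1, L > 0, and k ∈ ℤ, let μ_k = (1/(2L)) log((α-1)/(α+1)) + i kπ/L. Then the complex numbers (sinh(μ_k x), μ_k sinh(μ_k x))/B_k, k ∈ ℤ, where B_k = (1/(L√(2β))) √((β²L² + k²π²) sinh(2βL)) and β = -(1/(2L)) log((α-1)/(α+1)) > 0, are unit-norm eigenvectors of the operator A_tr(w¹,w²) = (w², (w¹)'') with domain {(w¹,w²) ∈ H : w¹ ∈ H², w² ∈ H¹, w²(0)=0, (w¹)'(L)+αw²(L)=0}, associated with the eigenvalues μ_k; i.e., each μ_k is an eigenvalue of A_tr with eigenvector φ_k = B_k^{-1}(sinh(μ_k ·), μ_k sinh(μ_k ·)). -/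

import Mathlib

open MeasureTheory Set

lemma aux_norm_sq (z : ℂ) :
    ‖Complex.cosh z‖^2 + ‖Complex.sinh z‖^2 = Real.cosh (2*z.re) := by
  rw [Complex.sq_norm, Complex.sq_norm]
  apply Complex.ofReal_inj.mp
  rw [Complex.ofReal_add, Complex.normSq_eq_conj_mul_self, Complex.normSq_eq_conj_mul_self,
    ← Complex.cosh_conj, ← Complex.sinh_conj, ← Complex.cosh_add, Complex.ofReal_cosh]
  rw [add_comm ((starRingEnd ℂ) z) z, Complex.add_conj]

theorem stmt_14 (L α : ℝ) (hL : 0 < L) (hα : 1 < α) (k : ℤ)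
    (β : ℝ) (hβ : β = -(1/(2*L)) * Real.log ((α-1)/(α+1)))
    (μ : ℂ) (hμ : μ = ((1/(2*L)) * Real.log ((α-1)/(α+1)) : ℝ)
      + Complex.I * (k : ℂ) * (Real.pi : ℂ) / (L : ℂ))
    (B : ℝ) (hB : B = (1/(L * Real.sqrt (2*β))) *
      Real.sqrt ((β^2 * L^2 + (k:ℝ)^2 * Real.pi^2) * Real.sinh (2*β*L)))
    (φ1 φ2 d1 : ℝ → ℂ)
    (hφ1 : ∀ x : ℝ, φ1 x = Complex.sinh (μ * (x : ℂ)) / (B : ℂ))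
    (hφ2 : ∀ x : ℝ, φ2 x = μ * Complex.sinh (μ * (x : ℂ)) / (B : ℂ))
    (hd1 : ∀ x : ℝ, d1 x = μ * Complex.cosh (μ * (x : ℂ)) / (B : ℂ)) :
    0 < β ∧
    φ1 0 = 0 ∧ φ2 0 = 0 ∧
    (∀ x : ℝ, HasDerivAt φ1 (d1 x) x) ∧
    (∀ x : ℝ, HasDerivAt d1 (μ * φ2 x) x) ∧
    (∀ x : ℝ, φ2 x = μ * φ1 x) ∧
    d1 L + (α : ℂ) * φ2 L = 0 ∧
    (∫ x in (0:ℝ)..L, (‖d1 x‖^2 + ‖φ2 x‖^2)) = 1 := by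
  set r : ℝ := (α-1)/(α+1) with hr
  have hα1 : (0:ℝ) < α + 1 := by linarith
  have hr0 : 0 < r := div_pos (by linarith) hα1
  have hr1 : r < 1 := (div_lt_one hα1).2 (by linarith)
  have hlog : Real.log r < 0 := Real.log_neg hr0 hr1
  have hβ0 : 0 < β := by
    rw [hβ]
    have h1 : (0:ℝ) < 1/(2*L) := by positivity
    nlinarith
  -- nicer form of μ
  have hμ' : μ = (↑(-β) : ℂ) + (↑((k:ℝ)*Real.pi/L) : ℂ) * Complex.I := by
    rw [hμ, hβ]
    push_cast
    field_simp
  have hμre : μ.re = -β := by rw [hμ']; simp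
  have hμim : μ.im = (k:ℝ)*Real.pi/L := by rw [hμ']; simp
  -- positivity of B
  have hsinh : 0 < Real.sinh (2*β*L) := Real.sinh_pos_iff.2 (by positivity)
  have hq : 0 < β^2 * L^2 + (k:ℝ)^2 * Real.pi^2 := by positivity
  have hB0 : 0 < B := by
    rw [hB]
    apply mul_pos
    · rw [one_div]
      exact inv_pos.2 (mul_pos hL (Real.sqrt_pos.2 (by positivity)))
    · exact Real.sqrt_pos.2 (mul_pos hq hsinh)
  have hBne : (B:ℂ) ≠ 0 := by exact_mod_cast hB0.ne'
  -- derivatives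
  have keysinh : ∀ x : ℝ, HasDerivAt (fun t:ℝ => Complex.sinh (μ*(t:ℂ)))
      (μ * Complex.cosh (μ*(x:ℂ))) x := by
    intro x
    have h : HasDerivAt (fun z:ℂ => Complex.sinh (μ*z)) (μ * Complex.cosh (μ*(x:ℂ))) (x:ℂ) := by
      have := ((hasDerivAt_id (x:ℂ)).const_mul μ).csinh
      simp only [id_eq, mul_one] at this
      convert this using 1
      ring
    exact h.comp_ofReal
  have keycosh : ∀ x : ℝ, HasDerivAt (fun t:ℝ => Complex.cosh (μ*(t:ℂ)))
      (μ * Complex.sinh (μ*(x:ℂ))) x := by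
    intro x
    have h : HasDerivAt (fun z:ℂ => Complex.cosh (μ*z)) (μ * Complex.sinh (μ*(x:ℂ))) (x:ℂ) := by
      have := ((hasDerivAt_id (x:ℂ)).const_mul μ).ccosh
      simp only [id_eq, mul_one] at this
      convert this using 1
      ring
    exact h.comp_ofReal
  have hφ1f : φ1 = fun x : ℝ => Complex.sinh (μ*(x:ℂ)) / (B:ℂ) := funext hφ1
  have hd1f : d1 = fun x : ℝ => μ * Complex.cosh (μ*(x:ℂ)) / (B:ℂ) := funext hd1
  refine ⟨hβ0, ?_, ?_, ?_, ?_, ?_, ?_, ?_⟩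
  · rw [hφ1]; simp
  · rw [hφ2]; simp
  · intro x
    rw [hφ1f, hd1 x]
    exact (keysinh x).div_const B
  · intro x
    rw [hd1f, hφ2 x]
    have := (((keycosh x).const_mul μ).div_const (B:ℂ))
    convert this using 1
    · rfl
    ring
  · intro x
    rw [hφ2, hφ1]
    ring
  · -- boundary condition
    have hLne : (L:ℂ) ≠ 0 := by exact_mod_cast hL.ne'
    have hμL : μ * (L:ℂ) = (↑(Real.log r / 2) : ℂ) + (k:ℂ) * (Real.pi:ℂ) * Complex.I := by
      rw [hμ', hβ]
      push_cast
      field_simp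
    have hs2 : (Real.sqrt r)^2 = r := Real.sq_sqrt hr0.le
    have hsne : Real.sqrt r ≠ 0 := (Real.sqrt_pos.2 hr0).ne'
    have hexp : Complex.exp (μ*(L:ℂ)) = (↑(Real.sqrt r) : ℂ) * (-1:ℂ)^k := by
      rw [hμL, Complex.exp_add, mul_assoc, Complex.exp_int_mul, Complex.exp_pi_mul_I]
      congr 1
      rw [← Complex.ofReal_exp]
      congr 1
      rw [Real.sqrt_eq_rpow, Real.rpow_def_of_pos hr0]
      ring_nf
    have hinv : ((-1:ℂ)^k)⁻¹ = (-1:ℂ)^k := by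
      rw [← inv_zpow, inv_neg, inv_one]
    have hexpneg : Complex.exp (-(μ*(L:ℂ))) = (↑(Real.sqrt r) : ℂ)⁻¹ * (-1:ℂ)^k := by
      rw [Complex.exp_neg, hexp, mul_inv, hinv]
    have hkey : Complex.cosh (μ*(L:ℂ)) + (α:ℂ) * Complex.sinh (μ*(L:ℂ)) = 0 := by
      rw [Complex.cosh, Complex.sinh, hexp, hexpneg]
      have hsC : ((Real.sqrt r : ℝ) : ℂ) ≠ 0 := by exact_mod_cast hsne
      have hrel : ((1:ℂ) + α) * ((Real.sqrt r : ℝ) : ℂ)^2 + (1 - α) = 0 := by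
        have hre : (1 + α) * r + (1 - α) = 0 := by
          rw [hr]; field_simp; ring
        calc ((1:ℂ) + α) * ((Real.sqrt r : ℝ) : ℂ)^2 + (1 - α)
            = (((1 + α) * r + (1 - α) : ℝ) : ℂ) := by
              rw [show ((Real.sqrt r : ℝ) : ℂ)^2 = ((r:ℝ):ℂ) by
                rw [← Complex.ofReal_pow, hs2]]
              push_cast
              ring
          _ = 0 := by rw [hre]; simp
      field_simp
      linear_combination ((-1:ℂ)^k) * hrel
    rw [hd1, hφ2]
    have h0 : μ * Complex.cosh (μ*(L:ℂ)) / (B:ℂ) + (α:ℂ) * (μ * Complex.sinh (μ*(L:ℂ)) / (B:ℂ))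
        = μ * (Complex.cosh (μ*(L:ℂ)) + (α:ℂ) * Complex.sinh (μ*(L:ℂ))) / (B:ℂ) := by ring
    rw [h0, hkey, mul_zero, zero_div]
  · -- norm 1
    have hnorm : ∀ x : ℝ, ‖d1 x‖^2 + ‖φ2 x‖^2
        = ((β^2 + (k:ℝ)^2*Real.pi^2/L^2) / B^2) * Real.cosh (2*β*x) := by
      intro x
      rw [hd1, hφ2]
      have hμnorm : ‖μ‖^2 = β^2 + (k:ℝ)^2*Real.pi^2/L^2 := by
        rw [Complex.sq_norm, Complex.normSq_apply, hμre, hμim]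
        field_simp
      have hre : (μ*(x:ℂ)).re = -β * x := by
        rw [Complex.mul_re, hμre]
        simp
      have := aux_norm_sq (μ*(x:ℂ))
      rw [hre] at this
      rw [norm_div, norm_div, norm_mul, norm_mul, Complex.norm_real,
        Real.norm_eq_abs, abs_of_pos hB0]
      rw [div_pow, div_pow, mul_pow, mul_pow, ← add_div, ← mul_add, hμnorm]
      have h2 : Real.cosh (2 * (-β*x)) = Real.cosh (2*β*x) := by
        rw [show 2*(-β*x) = -(2*β*x) by ring, Real.cosh_neg]
      rw [h2] at this
      rw [this]
      ring
    simp_rw [hnorm]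
    rw [intervalIntegral.integral_const_mul]
    have hint : (∫ x in (0:ℝ)..L, Real.cosh (2*β*x)) = Real.sinh (2*β*L) / (2*β) := by
      have hF : ∀ x ∈ Set.uIcc (0:ℝ) L, HasDerivAt (fun t => Real.sinh (2*β*t) / (2*β))
          (Real.cosh (2*β*x)) x := by
        intro x _
        have h1 : HasDerivAt (fun t:ℝ => Real.sinh (2*β*t)) (Real.cosh (2*β*x) * (2*β)) x := by
          have := ((hasDerivAt_id x).const_mul (2*β)).sinh
          simp only [id_eq, mul_one] at this
          exact this
        have := h1.div_const (2*β)
        convert this using 1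
        · rfl
        · rfl
        field_simp
      have hcont : IntervalIntegrable (fun x => Real.cosh (2*β*x)) volume 0 L :=
        (Real.continuous_cosh.comp (continuous_const.mul continuous_id)).intervalIntegrable 0 L
      rw [intervalIntegral.integral_eq_sub_of_hasDerivAt hF hcont]
      simp
    rw [hint]
    have hBsq : B^2 = (β^2 * L^2 + (k:ℝ)^2 * Real.pi^2) * Real.sinh (2*β*L) / (L^2 * (2*β)) := by
      rw [hB, mul_pow, div_pow, mul_pow, one_pow,
        Real.sq_sqrt (by positivity : (0:ℝ) ≤ 2*β),
        Real.sq_sqrt (mul_nonneg hq.le hsinh.le)]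
      ring
    rw [hBsq]
    field_simp
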